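/- Let p≥2 be an integer and 1≤j≤p−1. Then for all τ∈ℍ one has F*_{j,p}(τ) = −i√(2p)·I_{f_{j,p}}(τ). -/

import Mathlib

noncomputable section

open Complex MeasureTheory Real Filter Topology

namespace QMF

/-- Principal-branch kernel `(-i(w+τ))^e`. -/
def ker (w τ e : ℂ) : ℂ := (-I * (w + τ)) ^ e

/-- `∫_a^{i∞} f(w)·(-i(w+τ))^e dw` along the vertical path `w = a + it`, `t ∈ (0,∞)`. -/
def lineInt (f : ℂ → ℂ) (e a τ : ℂ) : ℂ :=
  ∫ t in Set.Ioi (0 : ℝ), f (a + I * t) * ker (a + I * t) τ e * I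

/-- Non-holomorphic Eichler integral `∫_{-τ̄}^{i∞} f(w)·(-i(w+τ))^e dw`. -/
def EichI (f : ℂ → ℂ) (e τ : ℂ) : ℂ := lineInt f e (-(starRingEnd ℂ τ)) τ

/-- Theta integral `r_f(τ) = ∫_0^{i∞} f(w)·(-i(w+τ))^e dw`. -/
def rInt (f : ℂ → ℂ) (e τ : ℂ) : ℂ := lineInt f e 0 τ

/-- Double iterated integral
`∫_a^{i∞}∫_{w₁}^{i∞} F(w₁,w₂)·(-i(w₁+τ))^{e₁}·(-i(w₂+τ))^{e₂} dw₂ dw₁`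
along vertical paths `w₁ = a + it₁`, `w₂ = w₁ + it₂`. -/
def dblInt (F : ℂ → ℂ → ℂ) (e₁ e₂ a τ : ℂ) : ℂ :=
  ∫ t₁ in Set.Ioi (0 : ℝ), ∫ t₂ in Set.Ioi (0 : ℝ),
    F (a + I * t₁) (a + I * t₁ + I * t₂) *
      ker (a + I * t₁) τ e₁ * ker (a + I * t₁ + I * t₂) τ e₂ * (I * I)

/-- Double Eichler integral `∫_{-τ̄}^{i∞}∫_{w₁}^{i∞}`. -/
def dblEich (F : ℂ → ℂ → ℂ) (e₁ e₂ τ : ℂ) : ℂ := dblInt F e₁ e₂ (-(starRingEnd ℂ τ)) τ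

/-- Double theta integral `∫_0^{i∞}∫_{w₁}^{i∞}`. -/
def dblR (F : ℂ → ℂ → ℂ) (e₁ e₂ τ : ℂ) : ℂ := dblInt F e₁ e₂ 0 τ

/-- The weight-3/2 unary theta function `f_{j,p}`. -/
def fjp (p j : ℕ) (τ : ℂ) : ℂ :=
  (1 / (2 * (p : ℂ))) * ∑' n : ℤ,
    if n % (2 * (p : ℤ)) = (j : ℤ) % (2 * (p : ℤ)) then
      (n : ℂ) * Complex.exp (2 * (π : ℂ) * I * τ * (n : ℂ) ^ 2 / (4 * (p : ℂ)))
    else 0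

/-- Upper incomplete gamma function `Γ(s,x) = ∫_x^∞ e^{-t} t^{s-1} dt`. -/
def incGamma (s x : ℝ) : ℝ := ∫ t in Set.Ioi x, Real.exp (-t) * t ^ (s - 1)

/-- The non-holomorphic Eichler integral companion `F^*_{j,p}`. -/
def Fstar (p j : ℕ) (τ : ℂ) : ℂ :=
  (1 / ((Real.sqrt π : ℝ) : ℂ)) * ∑' n : ℤ,
    if n % (2 * (p : ℤ)) = (j : ℤ) % (2 * (p : ℤ)) then
      (n.sign : ℂ) * ((incGamma (1/2) (π * (n : ℝ) ^ 2 * τ.im / p) : ℝ) : ℂ) *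
        Complex.exp (-(2 * (π : ℂ) * I * τ * (n : ℂ) ^ 2 / (4 * (p : ℂ))))
    else 0

/-- Shimura's theta function `Θ_ν(A,h,N;τ)`. -/
def ShTheta (ν A : ℕ) (h : ℤ) (N : ℕ) (τ : ℂ) : ℂ :=
  ∑' m : ℤ, if m % (N : ℤ) = h % (N : ℤ) then
    (m : ℂ) ^ ν * Complex.exp ((π : ℂ) * I * τ * (A : ℂ) * (m : ℂ) ^ 2 / (N : ℂ) ^ 2)
  else 0

/-- `ζ_n^e = e^{2πie/n}`. -/
def zeta (n : ℕ) (e : ℤ) : ℂ := Complex.exp (2 * (π : ℂ) * I * (e : ℂ) / (n : ℂ))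

/-- Component `α + m` of a shifted lattice point, as a complex number. -/
def nv (a : ℝ) (m : ℤ) : ℂ := ((a + (m : ℝ) : ℝ) : ℂ)

/-- `θ₁(α;w)`. -/
def theta1 (α : ℝ × ℝ) (w₁ w₂ : ℂ) : ℂ :=
  ∑' m : ℤ × ℤ,
    (2 * nv α.1 m.1 + nv α.2 m.2) * nv α.2 m.2 *
      Complex.exp (3 * (π : ℂ) * I / 2 * (2 * nv α.1 m.1 + nv α.2 m.2) ^ 2 * w₁
        + (π : ℂ) * I / 2 * (nv α.2 m.2) ^ 2 * w₂)

/-- `θ₂(α;w)`. -/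
def theta2 (α : ℝ × ℝ) (w₁ w₂ : ℂ) : ℂ :=
  ∑' m : ℤ × ℤ,
    (3 * nv α.1 m.1 + 2 * nv α.2 m.2) * nv α.1 m.1 *
      Complex.exp ((π : ℂ) * I / 2 * (3 * nv α.1 m.1 + 2 * nv α.2 m.2) ^ 2 * w₁
        + 3 * (π : ℂ) * I / 2 * (nv α.1 m.1) ^ 2 * w₂)

/-- `θ₃(α;w)`. -/
def theta3 (α : ℝ × ℝ) (w₁ w₂ : ℂ) : ℂ :=
  ∑' m : ℤ × ℤ,
    (2 * nv α.1 m.1 + nv α.2 m.2) *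
      Complex.exp (3 * (π : ℂ) * I / 2 * (2 * nv α.1 m.1 + nv α.2 m.2) ^ 2 * w₁
        + (π : ℂ) * I / 2 * (nv α.2 m.2) ^ 2 * w₂)

/-- `θ₄(α;w)`. -/
def theta4 (α : ℝ × ℝ) (w₁ w₂ : ℂ) : ℂ :=
  ∑' m : ℤ × ℤ,
    (3 * nv α.1 m.1 + 2 * nv α.2 m.2) *
      Complex.exp ((π : ℂ) * I / 2 * (3 * nv α.1 m.1 + 2 * nv α.2 m.2) ^ 2 * w₁
        + 3 * (π : ℂ) * I / 2 * (nv α.1 m.1) ^ 2 * w₂)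

/-- `θ₅(α;w)`. -/
def theta5 (α : ℝ × ℝ) (w₁ w₂ : ℂ) : ℂ :=
  ∑' m : ℤ × ℤ,
    nv α.1 m.1 *
      Complex.exp ((π : ℂ) * I / 2 * (3 * nv α.1 m.1 + 2 * nv α.2 m.2) ^ 2 * w₁
        + 3 * (π : ℂ) * I / 2 * (nv α.1 m.1) ^ 2 * w₂)

/-- `𝓔_{1,α}(τ)`. -/
def E1a (α : ℝ × ℝ) (τ : ℂ) : ℂ :=
  -((Real.sqrt 3 : ℂ) / 4) *
    dblEich (fun w₁ w₂ => theta1 α w₁ w₂ + theta2 α w₁ w₂) (-(1/2)) (-(1/2)) τ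

/-- `𝓔₁(τ) = Σ_{α ∈ 𝒮*} ε(α)·𝓔_{1,α}(pτ)`. -/
def E1 (p : ℕ) (τ : ℂ) : ℂ :=
  (-2) * E1a (1 - 1/(p:ℝ), 2/(p:ℝ)) ((p:ℂ) * τ)
    + E1a (0, 1 - 1/(p:ℝ)) ((p:ℂ) * τ) + E1a (1/(p:ℝ), 1 - 1/(p:ℝ)) ((p:ℂ) * τ)

/-- `H_{1,α}(τ)`. -/
def H1 (α : ℝ × ℝ) (τ : ℂ) : ℂ :=
  -(Real.sqrt 3 : ℂ) *
    dblR (fun w₁ w₂ => theta1 α w₁ w₂ + theta2 α w₁ w₂) (-(1/2)) (-(1/2)) τ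

/-- `𝓔_{2,α}(τ)`. -/
def E2a (α : ℝ × ℝ) (τ : ℂ) : ℂ :=
  (Real.sqrt 3 : ℂ) / (8 * (π : ℂ)) *
      dblEich (fun w₁ w₂ => 2 * theta3 α w₁ w₂ - theta4 α w₁ w₂) (-(1/2)) (-(3/2)) τ
    + (Real.sqrt 3 : ℂ) / (8 * (π : ℂ)) *
      dblEich (fun w₁ w₂ => theta5 α w₁ w₂) (-(3/2)) (-(1/2)) τ

/-- `𝓔₂(τ) = Σ_{α ∈ 𝒮*} 𝓔_{2,α}(pτ)`. -/
def E2 (p : ℕ) (τ : ℂ) : ℂ :=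
  E2a (1 - 1/(p:ℝ), 2/(p:ℝ)) ((p:ℂ) * τ)
    + E2a (0, 1 - 1/(p:ℝ)) ((p:ℂ) * τ) + E2a (1/(p:ℝ), 1 - 1/(p:ℝ)) ((p:ℂ) * τ)

/-- `H_{2,α}(τ)`. -/
def H2 (α : ℝ × ℝ) (τ : ℂ) : ℂ :=
  (Real.sqrt 3 : ℂ) * I / (2 * (π : ℂ)) *
      dblR (fun w₁ w₂ => 2 * theta3 α w₁ w₂ - theta4 α w₁ w₂) (-(1/2)) (-(3/2)) τ
    + (Real.sqrt 3 : ℂ) * I / (2 * (π : ℂ)) *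
      dblR (fun w₁ w₂ => theta5 α w₁ w₂) (-(3/2)) (-(1/2)) τ

/-- `I_𝐤(τ)`. -/
def Ik (p : ℕ) (k : ℤ × ℤ) (τ : ℂ) : ℂ :=
  -((Real.sqrt 3 : ℂ) / (4 * (p : ℂ))) *
    dblEich (fun w₁ w₂ => ShTheta 1 (2*p) k.1 (2*p) w₁ * ShTheta 1 (6*p) k.2 (6*p) w₂)
      (-(1/2)) (-(1/2)) τ

/-- `J_𝐤(τ) = Σ_{δ∈{0,1}} I_{(k₁+δp, k₂+3δp)}(τ)`. -/
def Jk (p : ℕ) (k : ℤ × ℤ) (τ : ℂ) : ℂ :=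
  ∑ δ ∈ Finset.range 2, Ik p (k.1 + (δ:ℤ) * p, k.2 + 3 * (δ:ℤ) * p) τ

/-- `r_𝐤(τ)`. -/
def rk (p : ℕ) (k : ℤ × ℤ) (τ : ℂ) : ℂ :=
  dblR (fun w₁ w₂ => ShTheta 1 (2*p) k.1 (2*p) w₁ * ShTheta 1 (6*p) k.2 (6*p) w₂)
    (-(1/2)) (-(1/2)) τ

/-- `𝓘_𝐤(τ)`. -/
def cI (p : ℕ) (k : ℤ × ℤ) (τ : ℂ) : ℂ :=
  -((Real.sqrt 3 : ℂ) / (8 * (π : ℂ))) *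
    dblEich (fun w₁ w₂ => ShTheta 1 (2*p) k.1 (2*p) w₁ * ShTheta 0 (6*p) k.2 (6*p) w₂)
      (-(1/2)) (-(3/2)) τ

/-- `𝓙_𝐤(τ) = Σ_{δ∈{0,1}} 𝓘_{(k₁+pδ, k₂+3pδ)}(τ)`. -/
def cJ (p : ℕ) (k : ℤ × ℤ) (τ : ℂ) : ℂ :=
  ∑ δ ∈ Finset.range 2, cI p (k.1 + (δ:ℤ) * p, k.2 + 3 * (δ:ℤ) * p) τ

/-- `𝓚_𝐤(τ) = 2𝓙_𝐤(τ) + 𝓙_{((k₁+k₂)/2, (k₂-3k₁)/2)}(τ)`. -/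
def cK (p : ℕ) (k : ℤ × ℤ) (τ : ℂ) : ℂ :=
  2 * cJ p k τ + cJ p ((k.1 + k.2)/2, (k.2 - 3*k.1)/2) τ

/-- `R_𝐤(τ)`. -/
def Rk (p : ℕ) (k : ℤ × ℤ) (τ : ℂ) : ℂ :=
  dblR (fun w₁ w₂ => ShTheta 1 (2*p) k.1 (2*p) w₁ * ShTheta 0 (6*p) k.2 (6*p) w₂)
    (-(1/2)) (-(3/2)) τ

/-- `𝓕_α(x)`. -/
def Fcal (α x : ℝ) : ℝ := Real.sinh (2*π*x) / (Real.cosh (2*π*x) - Real.cos (2*π*α))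

/-- `𝒢_α(x)`. -/
def Gcal (α x : ℝ) : ℝ := Real.sin (2*π*α) / (Real.cosh (2*π*x) - Real.cos (2*π*α))

/-- `𝒢*_α(x) = x·𝒢_α(x)`. -/
def Gstar (α x : ℝ) : ℝ := x * Gcal α x

/-- `a` is an integer. -/
def isInt (a : ℝ) : Prop := ∃ n : ℤ, a = (n : ℝ)

open Classical in
/-- The function `g_{1,α}`. -/
def g1 (α w : ℝ × ℝ) : ℝ :=
  if isInt α.1 then
    -2 * Fcal 0 w.1 * Fcal α.2 w.2 + 2/(π * w.1) * Fcal α.2 (w.2 + 3*w.1/2)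
  else if isInt α.2 then
    -2 * Fcal α.1 w.1 * Fcal 0 w.2 + 2/(π * w.2) * Fcal α.1 (w.1 + w.2/2)
  else
    2 * Gcal α.1 w.1 * Gcal α.2 w.2 - 2 * Fcal α.1 w.1 * Fcal α.2 w.2

open Classical in
/-- The function `g_{2,α}`. -/
def g2 (α w : ℝ × ℝ) : ℂ :=
  if isInt α.1 then
    -2 * I * ((Fcal 0 w.1 * Gstar α.2 w.2 - 1/(π*w.1) * Gstar α.2 (w.2 + 3*w.1/2) : ℝ) : ℂ)
  else
    -2 * I * ((w.2 : ℝ) : ℂ) *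
      ((Gcal α.1 w.1 * Fcal α.2 w.2 + Fcal α.1 w.1 * Gcal α.2 w.2 : ℝ) : ℂ)

/-- The quadratic form `Q(w) = 3w₁² + w₂² + 3w₁w₂`. -/
def Qf (w : ℝ × ℝ) : ℝ := 3*w.1^2 + w.2^2 + 3*w.1*w.2

/-- The function `M₂(κ; u₁, u₂)`, defined by a double contour integral over
horizontal lines `ℝ - iu₂` (outer) and `ℝ - iu₁` (inner). -/
def M2 (κ u₁ u₂ : ℝ) : ℂ :=
  -(1/(π:ℂ)^2) * ∫ t₂ : ℝ, ∫ t₁ : ℝ,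
    Complex.exp (-(π:ℂ) * ((t₁:ℂ) - I*(u₁:ℂ))^2 - (π:ℂ) * ((t₂:ℂ) - I*(u₂:ℂ))^2
        - 2*(π:ℂ)*I*((u₁:ℂ)*((t₁:ℂ) - I*(u₁:ℂ)) + (u₂:ℂ)*((t₂:ℂ) - I*(u₂:ℂ)))) /
      (((t₂:ℂ) - I*(u₂:ℂ)) * (((t₁:ℂ) - I*(u₁:ℂ)) - (κ:ℂ)*((t₂:ℂ) - I*(u₂:ℂ))))



/-! ### Auxiliary material for `stmt1` -/

lemma QMFshift_Ioi (g : ℝ → ℝ) (d : ℝ) :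
    ∫ t in Set.Ioi (0:ℝ), g (t + d) = ∫ s in Set.Ioi d, g s := by
  have h := (measurePreserving_add_right (volume : Measure ℝ) d).setIntegral_preimage_emb
    (MeasurableEquiv.addRight d).measurableEmbedding g (Set.Ioi d)
  simpa using h

lemma QMFgauss_int {b v : ℝ} (hb : 0 < b) (hv : 0 < v) :
    ∫ t in Set.Ioi (0:ℝ), Real.exp (-(b*t)) * (2*v + t) ^ (-(1/2):ℝ)
    = Real.exp (2*b*v) * b ^ (-(1/2):ℝ) * incGamma (1/2) (2*b*v) := by
  have h1 : ∫ t in Set.Ioi (0:ℝ), Real.exp (-(b*t)) * (2*v + t) ^ (-(1/2):ℝ)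
      = ∫ t in Set.Ioi (0:ℝ),
          (fun s => Real.exp (2*b*v) * (Real.exp (-(b*s)) * s ^ (-(1/2):ℝ))) (t + 2*v) := by
    apply integral_congr_ae (Filter.Eventually.of_forall fun t => ?_)
    simp only
    have he : Real.exp (-(b*t)) = Real.exp (2*b*v) * Real.exp (-(b*(t+2*v))) := by
      rw [← Real.exp_add]; ring_nf
    rw [he, add_comm (2*v) t]; ring
  rw [h1, QMFshift_Ioi (fun s => Real.exp (2*b*v) * (Real.exp (-(b*s)) * s ^ (-(1/2):ℝ))) (2*v)]
  rw [integral_const_mul]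
  have h3 : ∫ s in Set.Ioi (2*v), Real.exp (-(b*s)) * s ^ (-(1/2):ℝ)
      = b ^ ((1:ℝ)/2) * ∫ s in Set.Ioi (2*v),
          (fun u => Real.exp (-u) * u ^ (-(1/2):ℝ)) (b * s) := by
    rw [← integral_const_mul]
    apply setIntegral_congr_fun measurableSet_Ioi
    intro s hs
    simp only
    have hs0 : 0 < s := lt_trans (by positivity) hs
    rw [Real.mul_rpow hb.le hs0.le]
    rw [show b ^ ((1:ℝ)/2) * (Real.exp (-(b*s)) * (b ^ (-(1/2):ℝ) * s ^ (-(1/2):ℝ)))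
        = (b ^ ((1:ℝ)/2) * b ^ (-(1/2):ℝ)) * (Real.exp (-(b*s)) * s ^ (-(1/2):ℝ)) by ring]
    rw [← Real.rpow_add hb]
    norm_num
  rw [h3, integral_comp_mul_left_Ioi (fun u => Real.exp (-u) * u ^ (-(1/2):ℝ)) (2*v) hb]
  have h4 : incGamma (1/2) (2*b*v) = ∫ u in Set.Ioi (b*(2*v)), Real.exp (-u) * u ^ (-(1/2):ℝ) := by
    unfold incGamma
    norm_num [mul_comm, mul_assoc, mul_left_comm]
  rw [h4]
  rw [smul_eq_mul]
  rw [show b ^ ((1:ℝ)/2) * (b⁻¹ * ∫ u in Set.Ioi (b*(2*v)), Real.exp (-u) * u ^ (-(1/2):ℝ))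
      = (b ^ ((1:ℝ)/2) * b⁻¹) * ∫ u in Set.Ioi (b*(2*v)), Real.exp (-u) * u ^ (-(1/2):ℝ) by ring]
  rw [show b⁻¹ = b ^ (-1:ℝ) by rw [Real.rpow_neg_one], ← Real.rpow_add hb]
  norm_num [mul_assoc]

lemma QMFexp_rpow_integrable {b v : ℝ} (hb : 0 < b) (hv : 0 < v) :
    IntegrableOn (fun t => Real.exp (-(b*t)) * (2*v + t) ^ (-(1/2):ℝ)) (Set.Ioi (0:ℝ)) := by
  have hmeas : AEStronglyMeasurable (fun t => Real.exp (-(b*t)) * (2*v + t) ^ (-(1/2):ℝ))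
      (volume.restrict (Set.Ioi (0:ℝ))) := by
    apply ContinuousOn.aestronglyMeasurable ?_ measurableSet_Ioi
    apply ContinuousOn.mul (Continuous.continuousOn (by continuity))
    apply ContinuousOn.rpow_const (by fun_prop)
    intro x hx
    left
    have hx' : (0:ℝ) < x := hx
    exact ne_of_gt (by linarith)
  apply Integrable.mono (((exp_neg_integrableOn_Ioi 0 hb).const_mul ((2*v) ^ (-(1/2):ℝ)))) hmeas
  apply Filter.eventually_of_mem (self_mem_ae_restrict measurableSet_Ioi)
  intro t ht
  have h2v : (0:ℝ) < 2*v := by linarith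
  have ht' : (0:ℝ) < t := ht
  rw [Real.norm_eq_abs, Real.norm_eq_abs,
    _root_.abs_of_nonneg (mul_nonneg (Real.exp_pos _).le (Real.rpow_nonneg (by linarith) _)),
    _root_.abs_of_nonneg (mul_nonneg (Real.rpow_nonneg (by linarith) _) (Real.exp_pos _).le)]
  rw [mul_comm ((2*v) ^ (-(1/2):ℝ)), neg_mul]
  apply mul_le_mul_of_nonneg_left ?_ (Real.exp_pos _).le
  exact Real.rpow_le_rpow_of_nonpos h2v (by linarith) (by norm_num)

lemma QMFexp_int_Ioi {b : ℝ} (hb : 0 < b) :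
    ∫ t in Set.Ioi (0:ℝ), Real.exp (-(b*t)) = b⁻¹ := by
  have := integral_comp_mul_left_Ioi (fun u => Real.exp (-u)) 0 hb
  simp only [mul_zero] at this
  rw [show (fun t : ℝ => Real.exp (-(b*t))) = fun t => (fun u => Real.exp (-u)) (b*t) from rfl,
    this, integral_exp_neg_Ioi_zero, smul_eq_mul, mul_one]

/-- The decay rate `b_n = π n² / (2p)`. -/
def aB (p : ℕ) (n : ℤ) : ℝ := π * (n:ℝ)^2 / (2*p)

/-- The constant factor of the `n`-th term. -/
def aC (p : ℕ) (τ : ℂ) (n : ℤ) : ℂ :=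
  (1/(2*(p:ℂ))) * (n:ℂ) * I * Complex.exp (-((aB p n : ℝ):ℂ) * (I * (starRingEnd ℂ τ)))

/-- The real-valued profile of the `n`-th term. -/
def aG (p : ℕ) (τ : ℂ) (n : ℤ) (t : ℝ) : ℝ :=
  Real.exp (-(aB p n * t)) * (2*τ.im + t) ^ (-(1/2):ℝ)

/-- The `n`-th term of the integrand. -/
def aF (p j : ℕ) (τ : ℂ) (n : ℤ) (t : ℝ) : ℂ :=
  (if n % (2*(p:ℤ)) = (j:ℤ) % (2*(p:ℤ)) then aC p τ n else 0) * ((aG p τ n t : ℝ) : ℂ)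

lemma QMFcond_ne_zero {p j : ℕ} (hp : 2 ≤ p) (hj1 : 1 ≤ j) (hj2 : j ≤ p - 1) {n : ℤ}
    (h : n % (2*(p:ℤ)) = (j:ℤ) % (2*(p:ℤ))) : n ≠ 0 := by
  rintro rfl
  have hlt : j < 2*p := by omega
  rw [Int.zero_emod, Int.emod_eq_of_lt (by positivity) (by exact_mod_cast hlt)] at h
  omega

lemma QMFaB_pos {p : ℕ} (hp : 0 < p) {n : ℤ} (hn : n ≠ 0) : 0 < aB p n := by
  have hn' : ((n:ℝ))^2 > 0 := by
    have : (n:ℝ) ≠ 0 := Int.cast_ne_zero.mpr hn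
    positivity
  unfold aB
  have hp' : (0:ℝ) < p := by exact_mod_cast hp
  positivity

lemma QMFker_eq {τ : ℂ} (hv : 0 < τ.im) {t : ℝ} (ht : 0 < t) :
    ker (-(starRingEnd ℂ τ) + I*(t:ℂ)) τ (-(1/2)) = (((2*τ.im + t) ^ (-(1/2):ℝ) : ℝ) : ℂ) := by
  unfold ker
  have h := Complex.sub_conj τ
  push_cast at h
  have harg : -I * ((-(starRingEnd ℂ τ) + I*(t:ℂ)) + τ) = (((2*τ.im + t : ℝ)) : ℂ) := by
    push_cast
    linear_combination (-I) * h - (2*(τ.im:ℂ) + (t:ℂ))*Complex.I_sq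
  rw [harg, show (-(1/2):ℂ) = ((-(1/2):ℝ):ℂ) by norm_num,
    ← Complex.ofReal_cpow (by linarith) (-(1/2):ℝ)]

lemma QMFhB (p : ℕ) (hp : 0 < p) (n : ℤ) :
    2*(π:ℂ)*(n:ℂ)^2/(4*(p:ℂ)) = ((aB p n : ℝ) : ℂ) := by
  have hp0 : (p:ℂ) ≠ 0 := Nat.cast_ne_zero.mpr hp.ne'
  unfold aB
  push_cast
  field_simp
  ring

lemma QMFexp_split (p : ℕ) (hp : 0 < p) (τ : ℂ) (n : ℤ) (t : ℝ) :
    Complex.exp (2*(π:ℂ)*I*((-(starRingEnd ℂ τ)) + I*(t:ℂ))*(n:ℂ)^2/(4*(p:ℂ)))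
      = Complex.exp (-((aB p n : ℝ):ℂ) * (I * (starRingEnd ℂ τ)))
        * ((Real.exp (-(aB p n * t)) : ℝ) : ℂ) := by
  rw [Complex.ofReal_exp, ← Complex.exp_add]
  congr 1
  calc 2*(π:ℂ)*I*((-(starRingEnd ℂ τ)) + I*(t:ℂ))*(n:ℂ)^2/(4*(p:ℂ))
      = (2*(π:ℂ)*(n:ℂ)^2/(4*(p:ℂ))) * (I*((-(starRingEnd ℂ τ)) + I*(t:ℂ))) := by ring
    _ = ((aB p n : ℝ):ℂ) * (I*((-(starRingEnd ℂ τ)) + I*(t:ℂ))) := by rw [QMFhB p hp n]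
    _ = -((aB p n : ℝ):ℂ) * (I * (starRingEnd ℂ τ)) + ((-(aB p n * t) : ℝ) : ℂ) := by
        push_cast
        linear_combination (((aB p n : ℝ):ℂ) * (t:ℂ)) * Complex.I_sq

lemma QMFpoint_eq (p j : ℕ) (hp : 0 < p) (τ : ℂ) (hv : 0 < τ.im) {t : ℝ} (ht : 0 < t) :
    fjp p j (-(starRingEnd ℂ τ) + I*(t:ℂ))
        * ker (-(starRingEnd ℂ τ) + I*(t:ℂ)) τ (-(1/2)) * I
      = ∑' n : ℤ, aF p j τ n t := by
  rw [QMFker_eq hv ht]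
  unfold fjp
  rw [show (1/(2*(p:ℂ)))
        * (∑' n : ℤ, if n % (2*(p:ℤ)) = (j:ℤ) % (2*(p:ℤ)) then
            (n : ℂ) * Complex.exp (2 * (π : ℂ) * I * (-(starRingEnd ℂ τ) + I*(t:ℂ)) * (n : ℂ) ^ 2
              / (4 * (p : ℂ))) else 0)
        * (((2*τ.im + t) ^ (-(1/2):ℝ) : ℝ) : ℂ) * I
      = ∑' n : ℤ, (if n % (2*(p:ℤ)) = (j:ℤ) % (2*(p:ℤ)) then
            (n : ℂ) * Complex.exp (2 * (π : ℂ) * I * (-(starRingEnd ℂ τ) + I*(t:ℂ)) * (n : ℂ) ^ 2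
              / (4 * (p : ℂ))) else 0)
          * ((1/(2*(p:ℂ))) * (((2*τ.im + t) ^ (-(1/2):ℝ) : ℝ) : ℂ) * I) by
    rw [tsum_mul_right]; ring]
  apply tsum_congr
  intro n
  by_cases hc : n % (2*(p:ℤ)) = (j:ℤ) % (2*(p:ℤ))
  · simp only [hc, if_true, aF, aC, aG, if_pos]
    rw [QMFexp_split p hp τ n t]
    push_cast
    ring
  · simp [aF, hc]

lemma QMFaF_integrable (p j : ℕ) (hp : 2 ≤ p) (hj1 : 1 ≤ j) (hj2 : j ≤ p - 1)
    (τ : ℂ) (hv : 0 < τ.im) (n : ℤ) :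
    IntegrableOn (aF p j τ n) (Set.Ioi (0:ℝ)) := by
  by_cases hc : n % (2*(p:ℤ)) = (j:ℤ) % (2*(p:ℤ))
  · have hn := QMFcond_ne_zero hp hj1 hj2 hc
    have hb := QMFaB_pos (p := p) (by omega) hn
    unfold aF
    rw [if_pos hc]
    exact ((QMFexp_rpow_integrable hb hv).ofReal.const_mul _)
  · unfold aF
    simp only [if_neg hc, zero_mul]
    exact integrable_zero _ _ _

lemma QMFaF_integral (p j : ℕ) (hp : 2 ≤ p) (hj1 : 1 ≤ j) (hj2 : j ≤ p - 1)
    (τ : ℂ) (hv : 0 < τ.im) (n : ℤ) :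
    ∫ t in Set.Ioi (0:ℝ), aF p j τ n t
      = if n % (2*(p:ℤ)) = (j:ℤ) % (2*(p:ℤ)) then
          aC p τ n * ((Real.exp (2*aB p n*τ.im) * (aB p n) ^ (-(1/2):ℝ)
            * incGamma (1/2) (2*aB p n*τ.im) : ℝ) : ℂ)
        else 0 := by
  by_cases hc : n % (2*(p:ℤ)) = (j:ℤ) % (2*(p:ℤ))
  · have hn := QMFcond_ne_zero hp hj1 hj2 hc
    have hb := QMFaB_pos (p := p) (show 0 < p by omega) hn
    unfold aF
    simp only [if_pos hc]
    rw [integral_const_mul]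
    congr 1
    unfold aG
    rw [← QMFgauss_int hb hv]
    exact integral_ofReal
  · simp [aF, hc]

lemma QMFnorm_aC (p : ℕ) (hp : 0 < p) (τ : ℂ) (n : ℤ) :
    ‖aC p τ n‖ = 1/(2*(p:ℝ)) * |(n:ℝ)| * Real.exp (-(aB p n * τ.im)) := by
  have hre : ((-((aB p n : ℝ):ℂ)) * (I * (starRingEnd ℂ τ))).re = -(aB p n * τ.im) := by
    simp [Complex.mul_re, Complex.mul_im]
  unfold aC
  rw [norm_mul, norm_mul, norm_mul]
  simp only [Complex.norm_I, Complex.norm_exp, mul_one]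
  rw [hre]
  congr 2
  · rw [norm_div, norm_one]
    norm_num [norm_mul, Complex.norm_natCast]
  · simp

lemma QMFsummable (p j : ℕ) (hp : 2 ≤ p) (hj1 : 1 ≤ j) (hj2 : j ≤ p - 1)
    (τ : ℂ) (hv : 0 < τ.im) :
    Summable (fun n : ℤ => ∫ t in Set.Ioi (0:ℝ), ‖aF p j τ n t‖) := by
  have hp0 : (0:ℝ) < p := by exact_mod_cast (by omega : 0 < p)
  set c : ℝ := π * τ.im / (2*p) with hc_def
  have hc : 0 < c := by positivity
  have hsum : Summable (fun n : ℤ =>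
      (2*τ.im) ^ (-(1/2):ℝ) * π⁻¹ * Real.exp (-(c * |(n:ℝ)|))) := by
    apply Summable.mul_left
    have hgeo : Summable (fun k : ℕ => Real.exp (-c) ^ k) :=
      summable_geometric_of_lt_one (Real.exp_pos _).le (Real.exp_lt_one_iff.mpr (by linarith))
    apply Summable.of_nat_of_neg
    · exact hgeo.congr fun k => by
        rw [← Real.exp_nat_mul]; congr 1
        push_cast
        rw [_root_.abs_of_nonneg (by positivity : (0:ℝ) ≤ (k:ℝ))]
        ring
    · exact hgeo.congr fun k => by
        rw [← Real.exp_nat_mul]; congr 1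
        push_cast
        rw [abs_neg, _root_.abs_of_nonneg (by positivity : (0:ℝ) ≤ (k:ℝ))]
        ring
  apply Summable.of_nonneg_of_le (fun n => integral_nonneg fun t => norm_nonneg _) ?_ hsum
  intro n
  by_cases hc' : n % (2*(p:ℤ)) = (j:ℤ) % (2*(p:ℤ))
  · have hn := QMFcond_ne_zero hp hj1 hj2 hc'
    have hb := QMFaB_pos (p := p) (by omega) hn
    have h1n : (1:ℝ) ≤ |(n:ℝ)| := by
      rw [← Int.cast_abs]; exact_mod_cast Int.one_le_abs (by omega)
    have habs : ∀ t : ℝ, ‖aF p j τ n t‖ = ‖aC p τ n‖ * ‖((aG p τ n t : ℝ):ℂ)‖ := by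
      intro t; unfold aF; rw [if_pos hc', norm_mul]
    have hnormG : ∀ t : ℝ, ‖((aG p τ n t : ℝ):ℂ)‖ = |aG p τ n t| := by
      intro t; rw [Complex.norm_real, Real.norm_eq_abs]
    have step1 : ∫ t in Set.Ioi (0:ℝ), ‖aF p j τ n t‖
        = ‖aC p τ n‖ * ∫ t in Set.Ioi (0:ℝ), |aG p τ n t| := by
      have hpt : (fun t => ‖aF p j τ n t‖)
          =ᵐ[volume.restrict (Set.Ioi (0:ℝ))] (fun t => ‖aC p τ n‖ * |aG p τ n t|) :=
        Filter.Eventually.of_forall fun t => by simp only []; rw [habs t, hnormG t]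
      rw [integral_congr_ae hpt, integral_const_mul]
    have habs2 : ∀ t ∈ Set.Ioi (0:ℝ), |aG p τ n t| = aG p τ n t := by
      intro t ht
      have ht' : (0:ℝ) < t := ht
      exact abs_of_nonneg (mul_nonneg (Real.exp_pos _).le (Real.rpow_nonneg (by linarith) _))
    have hint2 : IntegrableOn (fun t => (2*τ.im) ^ (-(1/2):ℝ) * Real.exp (-(aB p n * t)))
        (Set.Ioi (0:ℝ)) := by
      have := (exp_neg_integrableOn_Ioi 0 hb).const_mul ((2*τ.im) ^ (-(1/2):ℝ))
      simpa [neg_mul, IntegrableOn] using this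
    have step2 : ∫ t in Set.Ioi (0:ℝ), |aG p τ n t|
        ≤ (2*τ.im) ^ (-(1/2):ℝ) * (aB p n)⁻¹ := by
      rw [setIntegral_congr_fun measurableSet_Ioi habs2]
      have hmono : ∫ t in Set.Ioi (0:ℝ), aG p τ n t
          ≤ ∫ t in Set.Ioi (0:ℝ), (2*τ.im) ^ (-(1/2):ℝ) * Real.exp (-(aB p n * t)) := by
        apply setIntegral_mono_on (QMFexp_rpow_integrable hb hv) hint2 measurableSet_Ioi
        intro t ht
        have ht' : (0:ℝ) < t := ht
        show aG p τ n t ≤ _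
        unfold aG
        rw [mul_comm ((2*τ.im) ^ (-(1/2):ℝ))]
        apply mul_le_mul_of_nonneg_left ?_ (Real.exp_pos _).le
        exact Real.rpow_le_rpow_of_nonpos (by linarith) (by linarith) (by norm_num)
      rw [integral_const_mul, QMFexp_int_Ioi hb] at hmono
      exact hmono
    have step3 : ‖aC p τ n‖ * ((2*τ.im) ^ (-(1/2):ℝ) * (aB p n)⁻¹)
        ≤ (2*τ.im) ^ (-(1/2):ℝ) * π⁻¹ * Real.exp (-(c * |(n:ℝ)|)) := by
      rw [QMFnorm_aC p (by omega) τ n]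
      have hn2 : (n:ℝ)^2 = |(n:ℝ)|^2 := (_root_.sq_abs _).symm
      have hBinv : (aB p n)⁻¹ = 2*p/(π*(n:ℝ)^2) := by unfold aB; rw [inv_div]
      have hil : 1/(2*(p:ℝ)) * |(n:ℝ)| * (aB p n)⁻¹ ≤ π⁻¹ := by
        rw [hBinv, hn2]
        have hkey : 1/(2*(p:ℝ)) * |(n:ℝ)| * (2*p/(π*|(n:ℝ)|^2)) = 1/(π * |(n:ℝ)|) := by
          have h1 : |(n:ℝ)| ≠ 0 := by intro h; rw [h] at h1n; linarith
          field_simp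
        rw [hkey, one_div]
        apply inv_anti₀ Real.pi_pos
        nlinarith [Real.pi_pos]
      have hexp : Real.exp (-(aB p n * τ.im)) ≤ Real.exp (-(c * |(n:ℝ)|)) := by
        apply Real.exp_le_exp.mpr
        rw [neg_le_neg_iff]
        have : aB p n * τ.im = c * (n:ℝ)^2 := by unfold aB; rw [hc_def]; ring
        rw [this, hn2]
        apply mul_le_mul_of_nonneg_left ?_ hc.le
        nlinarith
      calc 1/(2*(p:ℝ)) * |(n:ℝ)| * Real.exp (-(aB p n * τ.im))
            * ((2*τ.im) ^ (-(1/2):ℝ) * (aB p n)⁻¹)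
          = (1/(2*(p:ℝ)) * |(n:ℝ)| * (aB p n)⁻¹) * (2*τ.im) ^ (-(1/2):ℝ)
            * Real.exp (-(aB p n * τ.im)) := by ring
        _ ≤ π⁻¹ * (2*τ.im) ^ (-(1/2):ℝ) * Real.exp (-(c * |(n:ℝ)|)) := by
            apply mul_le_mul ?_ hexp (Real.exp_pos _).le (by positivity)
            exact mul_le_mul_of_nonneg_right hil (Real.rpow_nonneg (by linarith) _)
        _ = (2*τ.im) ^ (-(1/2):ℝ) * π⁻¹ * Real.exp (-(c * |(n:ℝ)|)) := by ring
    calc ∫ t in Set.Ioi (0:ℝ), ‖aF p j τ n t‖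
        = ‖aC p τ n‖ * ∫ t in Set.Ioi (0:ℝ), |aG p τ n t| := step1
      _ ≤ ‖aC p τ n‖ * ((2*τ.im) ^ (-(1/2):ℝ) * (aB p n)⁻¹) :=
          mul_le_mul_of_nonneg_left step2 (norm_nonneg _)
      _ ≤ _ := step3
  · have hz : ∀ t : ℝ, aF p j τ n t = 0 := by
      intro t; unfold aF; rw [if_neg hc', zero_mul]
    simp only [hz, norm_zero, integral_zero]
    positivity

lemma QMFscalR {p : ℕ} (hp : 0 < p) {n : ℤ} (hn : n ≠ 0) :
    Real.sqrt (2*p) * (1/(2*(p:ℝ))) * (n:ℝ) * (aB p n) ^ (-(1/2):ℝ)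
      = (Int.sign n : ℝ) * (1/Real.sqrt π) := by
  have hp0 : (0:ℝ) < p := by exact_mod_cast hp
  have h2p : (0:ℝ) < 2*(p:ℝ) := by linarith
  have hone : (1:ℝ) ≤ |(n:ℝ)| := by
    rw [← Int.cast_abs]; exact_mod_cast Int.one_le_abs (by omega)
  have habs0 : |(n:ℝ)| ≠ 0 := by intro h; rw [h] at hone; linarith
  have hnr : (n:ℝ) ≠ 0 := Int.cast_ne_zero.mpr hn
  have hBval : (aB p n) ^ (-(1/2):ℝ) = Real.sqrt (2*p) / (Real.sqrt π * |(n:ℝ)|) := by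
    have hb : 0 < π * (n:ℝ)^2 / (2*p) := by positivity
    unfold aB
    rw [Real.rpow_neg hb.le, ← Real.sqrt_eq_rpow, Real.sqrt_div (by positivity) ,
      Real.sqrt_mul Real.pi_pos.le, Real.sqrt_sq_eq_abs, inv_div]
  rw [hBval]
  have hss : Real.sqrt (2*(p:ℝ)) * Real.sqrt (2*(p:ℝ)) = 2*(p:ℝ) := Real.mul_self_sqrt h2p.le
  have hsgn : (n:ℝ) = (Int.sign n : ℝ) * |(n:ℝ)| := by
    rw [← Int.cast_abs]; exact_mod_cast (Int.sign_mul_abs n).symm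
  have key : Real.sqrt (2*(p:ℝ)) * Real.sqrt (2*(p:ℝ)) * ((n:ℝ) * (1/(2*(p:ℝ)))) = (n:ℝ) := by
    rw [hss]; field_simp
  calc Real.sqrt (2*p) * (1/(2*(p:ℝ))) * (n:ℝ) * (Real.sqrt (2*p) / (Real.sqrt π * |(n:ℝ)|))
      = (Real.sqrt (2*(p:ℝ)) * Real.sqrt (2*(p:ℝ)) * ((n:ℝ) * (1/(2*(p:ℝ)))))
          / (Real.sqrt π * |(n:ℝ)|) := by ring
    _ = (n:ℝ)/(Real.sqrt π * |(n:ℝ)|) := by rw [key]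
    _ = ((Int.sign n:ℝ) * |(n:ℝ)|)/(Real.sqrt π * |(n:ℝ)|) := by rw [← hsgn]
    _ = (Int.sign n:ℝ)/Real.sqrt π := by
        rw [mul_comm (Real.sqrt π), ← div_div, mul_div_assoc, div_self habs0, mul_one]
    _ = (Int.sign n:ℝ) * (1/Real.sqrt π) := by ring

lemma QMFmerge (p : ℕ) (hp : 0 < p) (τ : ℂ) (n : ℤ) :
    Complex.exp (-((aB p n : ℝ):ℂ) * (I * (starRingEnd ℂ τ)))
        * ((Real.exp (2*aB p n*τ.im) : ℝ):ℂ)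
      = Complex.exp (-(2*(π:ℂ)*I*τ*(n:ℂ)^2/(4*(p:ℂ)))) := by
  rw [Complex.ofReal_exp, ← Complex.exp_add]
  congr 1
  have hB := QMFhB p hp n
  have h := Complex.sub_conj τ
  push_cast at h ⊢
  linear_combination (I*τ)*hB + (((aB p n : ℝ):ℂ)*I)*h
    + (2*((aB p n : ℝ):ℂ)*(τ.im:ℂ))*Complex.I_sq

lemma QMFper_n (p j : ℕ) (hp : 2 ≤ p) (hj1 : 1 ≤ j) (hj2 : j ≤ p - 1)
    (τ : ℂ) (hv : 0 < τ.im) (n : ℤ) :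
    (1 / ((Real.sqrt π : ℝ) : ℂ)) * (if n % (2 * (p : ℤ)) = (j : ℤ) % (2 * (p : ℤ)) then
      (n.sign : ℂ) * ((incGamma (1/2) (π * (n : ℝ) ^ 2 * τ.im / p) : ℝ) : ℂ) *
        Complex.exp (-(2 * (π : ℂ) * I * τ * (n : ℂ) ^ 2 / (4 * (p : ℂ)))) else 0)
    = -I * ((Real.sqrt (2 * p) : ℝ) : ℂ) * (if n % (2*(p:ℤ)) = (j:ℤ) % (2*(p:ℤ)) then
        aC p τ n * ((Real.exp (2*aB p n*τ.im) * (aB p n) ^ (-(1/2):ℝ)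
          * incGamma (1/2) (2*aB p n*τ.im) : ℝ) : ℂ) else 0) := by
  by_cases hc : n % (2*(p:ℤ)) = (j:ℤ) % (2*(p:ℤ))
  · have hn := QMFcond_ne_zero hp hj1 hj2 hc
    have hp0 : 0 < p := by omega
    have hp0' : (0:ℝ) < p := by exact_mod_cast hp0
    simp only [if_pos hc]
    have harg : π * (n:ℝ)^2 * τ.im / p = 2*(aB p n)*τ.im := by
      unfold aB; field_simp
    rw [harg]
    unfold aC
    have hrhs : -I * ((Real.sqrt (2 * p) : ℝ) : ℂ)
        * ((1/(2*(p:ℂ))) * (n:ℂ) * I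
            * Complex.exp (-((aB p n : ℝ):ℂ) * (I * (starRingEnd ℂ τ)))
          * ((Real.exp (2*aB p n*τ.im) * (aB p n) ^ (-(1/2):ℝ)
              * incGamma (1/2) (2*aB p n*τ.im) : ℝ) : ℂ))
        = (-I * ((Real.sqrt (2 * p) : ℝ) : ℂ) * ((1/(2*(p:ℂ))) * (n:ℂ) * I)
            * (((aB p n) ^ (-(1/2):ℝ) : ℝ):ℂ)
            * ((incGamma (1/2) (2*aB p n*τ.im) : ℝ):ℂ))
          * (Complex.exp (-((aB p n : ℝ):ℂ) * (I * (starRingEnd ℂ τ)))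
              * ((Real.exp (2*aB p n*τ.im) : ℝ):ℂ)) := by
      push_cast
      ring
    rw [hrhs, QMFmerge p hp0 τ n]
    have hscalC : -I * ((Real.sqrt (2 * p) : ℝ) : ℂ) * ((1/(2*(p:ℂ))) * (n:ℂ) * I)
        * (((aB p n) ^ (-(1/2):ℝ) : ℝ):ℂ)
        = ((n.sign : ℤ):ℂ) * (1 / ((Real.sqrt π : ℝ) : ℂ)) := by
      have h1 : -I * ((Real.sqrt (2 * p) : ℝ) : ℂ) * ((1/(2*(p:ℂ))) * (n:ℂ) * I)
          * (((aB p n) ^ (-(1/2):ℝ) : ℝ):ℂ)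
          = (((Real.sqrt (2 * p) : ℝ) : ℂ) * (1/(2*(p:ℂ))) * (n:ℂ)
              * (((aB p n) ^ (-(1/2):ℝ) : ℝ):ℂ)) * (-(I*I)) := by ring
      rw [h1, Complex.I_mul_I, neg_neg, mul_one]
      have h3 := congrArg (fun x : ℝ => (x : ℂ)) (QMFscalR hp0 hn)
      push_cast at h3 ⊢
      linear_combination h3
    linear_combination (-((incGamma (1/2) (2*aB p n*τ.im) : ℝ):ℂ)
      * Complex.exp (-(2 * (π : ℂ) * I * τ * (n : ℂ) ^ 2 / (4 * (p : ℂ))))) * hscalC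
  · simp [if_neg hc]

theorem QMFstmt1 (p : ℕ) (hp : 2 ≤ p) (j : ℕ) (hj1 : 1 ≤ j) (hj2 : j ≤ p - 1)
    (τ : ℂ) (hτ : 0 < τ.im) :
    Fstar p j τ = -I * ((Real.sqrt (2 * p) : ℝ) : ℂ) * EichI (fjp p j) (-(1/2)) τ := by
  have hp0 : 0 < p := by omega
  have h1 : EichI (fjp p j) (-(1/2)) τ = ∫ t in Set.Ioi (0:ℝ), ∑' n : ℤ, aF p j τ n t := by
    unfold EichI lineInt
    apply setIntegral_congr_fun measurableSet_Ioi
    intro t ht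
    exact QMFpoint_eq p j hp0 τ hτ ht
  have h2 : ∑' n : ℤ, (∫ t in Set.Ioi (0:ℝ), aF p j τ n t)
      = ∫ t in Set.Ioi (0:ℝ), ∑' n : ℤ, aF p j τ n t :=
    integral_tsum_of_summable_integral_norm
      (fun n => QMFaF_integrable p j hp hj1 hj2 τ hτ n)
      (QMFsummable p j hp hj1 hj2 τ hτ)
  rw [h1, ← h2]
  unfold Fstar
  rw [← tsum_mul_left, ← tsum_mul_left]
  apply tsum_congr
  intro n
  rw [QMFaF_integral p j hp hj1 hj2 τ hτ n]
  exact QMFper_n p j hp hj1 hj2 τ hτ n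

/-- `F*_{j,p}(τ) = -i√(2p)·I_{f_{j,p}}(τ)`. -/
theorem stmt1 (p : ℕ) (hp : 2 ≤ p) (j : ℕ) (hj1 : 1 ≤ j) (hj2 : j ≤ p - 1)
    (τ : ℂ) (hτ : 0 < τ.im) :
    Fstar p j τ = -I * ((Real.sqrt (2 * p) : ℝ) : ℂ) * EichI (fjp p j) (-(1/2)) τ :=
  QMFstmt1 p hp j hj1 hj2 τ hτ

end QMF
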